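/- Let K be a compact metric space and F : K → ℝ. For every ordinal α and all reals a < b, K_α(F; a, b) ⊆ K_α(F, b − a), where K_α(F; a, b) are the sets defined by K₀ = K, K_{α+1}(F;a,b) = closure(K_α ∩ [F ≤ a]) ∩ closure(K_α ∩ [F ≥ b]), with intersections at limit ordinals, and K_α(F, δ) are the oscillation derived sets with K_{α+1}(F,δ) = {k ∈ K_α(F,δ) : osc_{K_α(F,δ)}(F,k) ≥ δ}. -/

import Mathlib

/-- The oscillation of `F` restricted to `L` at `x` is at least `δ`. -/
def oscGE {K : Type*} [TopologicalSpace K] (F : K → ℝ) (L : Set K) (x : K) (δ : ℝ) : Prop :=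
  ∀ U ∈ nhds x, ∀ η < δ, ∃ y ∈ L ∩ U, ∃ z ∈ L ∩ U, η < F y - F z

/-- The transfinite oscillation derived sets `K_α(F, δ)`. -/
noncomputable def oscDerivedSetO {K : Type*} [TopologicalSpace K] (F : K → ℝ) (δ : ℝ)
    (o : Ordinal.{0}) : Set K :=
  Ordinal.limitRecOn o Set.univ
    (fun _ ih => {x ∈ ih | oscGE F ih x δ})
    (fun o _ ih => ⋂ (β : Set.Iio o), ih β.1 β.2)

/-- The transfinite separation derived sets `K_α(F; a, b)`. -/
noncomputable def sepDerivedSetO {K : Type*} [TopologicalSpace K] (F : K → ℝ) (a b : ℝ)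
    (o : Ordinal.{0}) : Set K :=
  Ordinal.limitRecOn o Set.univ
    (fun _ ih => closure (ih ∩ {k | F k ≤ a}) ∩ closure (ih ∩ {k | b ≤ F k}))
    (fun o _ ih => ⋂ (β : Set.Iio o), ih β.1 β.2)

lemma oscGE_isClosed {K : Type*} [TopologicalSpace K] (F : K → ℝ) (L : Set K) (δ : ℝ) :
    IsClosed {x | oscGE F L x δ} := by
  refine isClosed_of_closure_subset fun x hx => ?_
  intro U hU η hη
  obtain ⟨V, hVU, hVopen, hxV⟩ := mem_nhds_iff.mp hU
  obtain ⟨y, hyV, hy⟩ := mem_closure_iff.mp hx V hVopen hxV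
  obtain ⟨p, hp, q, hq, h⟩ := hy V (hVopen.mem_nhds hyV) η hη
  exact ⟨p, ⟨hp.1, hVU hp.2⟩, q, ⟨hq.1, hVU hq.2⟩, h⟩

lemma oscD_zero {K : Type*} [TopologicalSpace K] (F : K → ℝ) (δ : ℝ) :
    oscDerivedSetO F δ 0 = Set.univ := Ordinal.limitRecOn_zero ..

lemma oscD_succ {K : Type*} [TopologicalSpace K] (F : K → ℝ) (δ : ℝ) (o : Ordinal.{0}) :
    oscDerivedSetO F δ (Order.succ o) =
      {x ∈ oscDerivedSetO F δ o | oscGE F (oscDerivedSetO F δ o) x δ} :=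
  Ordinal.limitRecOn_succ ..

lemma oscD_limit {K : Type*} [TopologicalSpace K] (F : K → ℝ) (δ : ℝ) (o : Ordinal.{0})
    (ho : Order.IsSuccLimit o) :
    oscDerivedSetO F δ o = ⋂ (β : Set.Iio o), oscDerivedSetO F δ β.1 :=
  Ordinal.limitRecOn_limit _ _ _ _ ho

lemma sepD_succ {K : Type*} [TopologicalSpace K] (F : K → ℝ) (a b : ℝ) (o : Ordinal.{0}) :
    sepDerivedSetO F a b (Order.succ o) =
      closure (sepDerivedSetO F a b o ∩ {k | F k ≤ a}) ∩
        closure (sepDerivedSetO F a b o ∩ {k | b ≤ F k}) :=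
  Ordinal.limitRecOn_succ ..

lemma sepD_limit {K : Type*} [TopologicalSpace K] (F : K → ℝ) (a b : ℝ) (o : Ordinal.{0})
    (ho : Order.IsSuccLimit o) :
    sepDerivedSetO F a b o = ⋂ (β : Set.Iio o), sepDerivedSetO F a b β.1 :=
  Ordinal.limitRecOn_limit _ _ _ _ ho

lemma oscD_isClosed {K : Type*} [TopologicalSpace K] (F : K → ℝ) (δ : ℝ) (o : Ordinal.{0}) :
    IsClosed (oscDerivedSetO F δ o) := by
  induction o using Ordinal.limitRecOn with
  | zero => rw [oscD_zero]; exact isClosed_univ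
  | add_one o ih =>
    rw [← Order.succ_eq_add_one]
    rw [oscD_succ]
    exact ih.inter (oscGE_isClosed F _ δ)
  | limit o ho ih =>
    rw [oscD_limit F δ o ho]
    exact isClosed_iInter fun β => ih β.1 β.2

/-- For every ordinal `α` and reals `a < b`,
`K_α(F; a, b) ⊆ K_α(F, b − a)`. -/
theorem stmt5 {K : Type*} [MetricSpace K] [CompactSpace K] (F : K → ℝ)
    (a b : ℝ) (hab : a < b) (α : Ordinal.{0}) :
    sepDerivedSetO F a b α ⊆ oscDerivedSetO F (b - a) α := by
  induction α using Ordinal.limitRecOn with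
  | zero => rw [oscD_zero]; exact Set.subset_univ _
  | add_one o ih =>
    rw [← Order.succ_eq_add_one]
    rw [sepD_succ, oscD_succ]
    rintro x ⟨hx1, hx2⟩
    have hsub : closure (sepDerivedSetO F a b o ∩ {k | F k ≤ a}) ∪
        closure (sepDerivedSetO F a b o ∩ {k | b ≤ F k}) ⊆ oscDerivedSetO F (b - a) o := by
      have h := (oscD_isClosed F (b - a) o).closure_subset_iff.mpr ih
      exact Set.union_subset
        ((closure_mono Set.inter_subset_left).trans h)
        ((closure_mono Set.inter_subset_left).trans h)
    refine ⟨hsub (Or.inl hx1), ?_⟩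
    intro U hU η hη
    obtain ⟨V, hVU, hVopen, hxV⟩ := mem_nhds_iff.mp hU
    obtain ⟨y, hyV, hy⟩ := mem_closure_iff.mp hx2 V hVopen hxV
    obtain ⟨z, hzV, hz⟩ := mem_closure_iff.mp hx1 V hVopen hxV
    refine ⟨y, ⟨ih hy.1, hVU hyV⟩, z, ⟨ih hz.1, hVU hzV⟩, ?_⟩
    have : b - a ≤ F y - F z := sub_le_sub hy.2 hz.2
    linarith
  | limit o ho ih =>
    rw [sepD_limit F a b o ho, oscD_limit F (b - a) o ho]
    exact Set.iInter_mono fun β => ih β.1 β.2
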